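/- Fix scalars β_k ∈ F* for k ≥ 0 and integers a_k with a_0 = 0, 0 ≤ a_k < k for k > 0, over a field F of characteristic zero. Then the linear operator R₂ on F₀[x,y] defined by R₂(x^k y^m) = ((k−a_k)β_k/(m+k−a_k)) y^{m+k−a_k} for k > 0, m ≥ 0, and R₂(y^m) = (β₀/m) y^m for m > 0, is a Rota–Baxter operator of weight zero on F₀[x,y]. -/
import Mathlib

open MvPolynomial

/-- The operator `R₂` on `F₀[x,y]` given by
`R₂(x^k y^m) = ((k−a_k)β_k/(m+k−a_k)) y^{m+k−a_k}` for `k > 0`, and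
`R₂(y^m) = (β₀/m) y^m` for `m > 0`, with all `β_k ≠ 0`, `a_0 = 0`, and
`0 ≤ a_k < k` for `k > 0`, is a Rota–Baxter operator of weight zero. -/
theorem stmt16 {F : Type*} [Field F] [CharZero F]
    (a : ℕ → ℕ) (ha0 : a 0 = 0) (ha : ∀ k : ℕ, 0 < k → a k < k)
    (β : ℕ → F) (hβ : ∀ k : ℕ, β k ≠ 0)
    (R : MvPolynomial (Fin 2) F →ₗ[F] MvPolynomial (Fin 2) F)
    (hR1 : ∀ k m : ℕ, 0 < k →
      R (X 0 ^ k * X 1 ^ m) =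
        (((k - a k : ℕ) : F) * β k / (((m + k - a k : ℕ) : F))) •
        (X 1 ^ (m + k - a k)))
    (hR2 : ∀ m : ℕ, 0 < m →
      R (X 1 ^ m) = (β 0 / (m : F)) • (X 1 ^ m)) :
    ∀ f g : MvPolynomial (Fin 2) F, coeff 0 f = 0 → coeff 0 g = 0 →
      R f * R g = R (R f * g + f * R g) := by
  classical
  have hae : ∀ k, a k ≤ k := by
    intro k
    rcases Nat.eq_zero_or_pos k with h | h
    · simp [h, ha0]
    · exact (ha k h).le
  set e : ℕ → ℕ → ℕ := fun k m => m + k - a k with he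
  set D : ℕ → F := fun k => if k = 0 then β 0 else ((k - a k : ℕ) : F) * β k with hD
  have hepos : ∀ k m, 0 < k + m → 0 < e k m := by
    intro k m hkm
    rcases Nat.eq_zero_or_pos k with h | h
    · simp only [he, h, ha0]; omega
    · have := ha k h; simp only [he]; omega
  have hRmono : ∀ k m, 0 < k + m →
      R (X 0 ^ k * X 1 ^ m) = (D k / ((e k m : ℕ) : F)) • X 1 ^ (e k m) := by
    intro k m hkm
    rcases Nat.eq_zero_or_pos k with h | h
    · subst h
      have hm : 0 < m := by omega
      simpa [he, hD, ha0] using hR2 m hm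
    · have := hR1 k m h
      simp only [he, hD, Nat.pos_iff_ne_zero.mp h, if_neg (Nat.pos_iff_ne_zero.mp h)]
      simpa using this
  -- key computation on monomials
  have key : ∀ k m j n : ℕ, 0 < k + m → 0 < j + n →
      R (X 0 ^ k * X 1 ^ m) * R (X 0 ^ j * X 1 ^ n) =
      R (R (X 0 ^ k * X 1 ^ m) * (X 0 ^ j * X 1 ^ n) +
         (X 0 ^ k * X 1 ^ m) * R (X 0 ^ j * X 1 ^ n)) := by
    intro k m j n hkm hjn
    have e1pos := hepos k m hkm
    have e2pos := hepos j n hjn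
    have h1 := hRmono k m hkm
    have h2 := hRmono j n hjn
    have hje : e j (n + e k m) = e k m + e j n := by
      have := hae j; simp only [he]; omega
    have hke : e k (m + e j n) = e k m + e j n := by
      have := hae k; simp only [he]; omega
    have h3 : R (X 0 ^ j * X 1 ^ (n + e k m)) =
        (D j / ((e k m + e j n : ℕ) : F)) • X 1 ^ (e k m + e j n) := by
      rw [hRmono j (n + e k m) (by omega), hje]
    have h4 : R (X 0 ^ k * X 1 ^ (m + e j n)) =
        (D k / ((e k m + e j n : ℕ) : F)) • X 1 ^ (e k m + e j n) := by
      rw [hRmono k (m + e j n) (by omega), hke]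
    rw [h1, h2]
    have hg1 : ((D k / ((e k m : ℕ) : F)) • (X 1 ^ e k m : MvPolynomial (Fin 2) F)) *
          (X 0 ^ j * X 1 ^ n)
        = (D k / ((e k m : ℕ) : F)) • (X 0 ^ j * X 1 ^ (n + e k m)) := by
      rw [smul_mul_assoc]; congr 1; ring
    have hg2 : ((X 0 ^ k * X 1 ^ m : MvPolynomial (Fin 2) F)) *
          ((D j / ((e j n : ℕ) : F)) • X 1 ^ e j n)
        = (D j / ((e j n : ℕ) : F)) • (X 0 ^ k * X 1 ^ (m + e j n)) := by
      rw [mul_smul_comm]; congr 1; ring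
    rw [hg1, hg2, map_add, map_smul, map_smul, h3, h4, smul_smul, smul_smul]
    rw [smul_mul_smul_comm, ← pow_add]
    rw [← add_smul]
    congr 1
    have he1 : ((e k m : ℕ) : F) ≠ 0 := Nat.cast_ne_zero.mpr (by omega)
    have he2 : ((e j n : ℕ) : F) ≠ 0 := Nat.cast_ne_zero.mpr (by omega)
    have he3 : ((e k m : ℕ) : F) + ((e j n : ℕ) : F) ≠ 0 := by
      have h0 : ((e k m + e j n : ℕ) : F) ≠ 0 := Nat.cast_ne_zero.mpr (by omega)
      push_cast at h0; exact h0
    push_cast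
    field_simp
    ring
  -- span argument
  set S : Set (MvPolynomial (Fin 2) F) :=
    {p | ∃ k m : ℕ, 0 < k + m ∧ p = X 0 ^ k * X 1 ^ m} with hS
  have hmem : ∀ f : MvPolynomial (Fin 2) F, coeff 0 f = 0 → f ∈ Submodule.span F S := by
    intro f hf
    rw [f.as_sum]
    refine Submodule.sum_mem _ fun v hv => ?_
    have hv0 : v ≠ 0 := by
      rintro rfl
      exact (mem_support_iff.mp hv) hf
    have hmono : (monomial v) (coeff v f) = coeff v f • (X 0 ^ v 0 * X 1 ^ v 1 :
        MvPolynomial (Fin 2) F) := by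
      rw [MvPolynomial.monomial_eq, Finsupp.prod_fintype _ _ (by simp)]
      rw [Fin.prod_univ_two]
      rw [MvPolynomial.smul_eq_C_mul]
    rw [hmono]
    refine Submodule.smul_mem _ _ (Submodule.subset_span ?_)
    refine ⟨v 0, v 1, ?_, rfl⟩
    by_contra h
    apply hv0
    ext i
    fin_cases i <;> simp <;> omega
  have hc : ∀ p ∈ Submodule.span F S, constantCoeff p = 0 := by
    intro p hp
    induction hp using Submodule.span_induction with
    | mem q hq =>
      obtain ⟨k, m, hkm, rfl⟩ := hq
      rcases Nat.eq_zero_or_pos k with h | h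
      · have hm : m ≠ 0 := by omega
        simp [h, hm]
      · simp [Nat.pos_iff_ne_zero.mp h]
    | zero => simp
    | add x y hx hy h1 h2 => simp [h1, h2]
    | smul r x hx h => simp [h]
  intro f g hf hg
  induction hmem f hf, hmem g hg using Submodule.span_induction₂ with
  | mem_mem x y hx hy =>
    obtain ⟨k, m, hkm, rfl⟩ := hx
    obtain ⟨j, n, hjn, rfl⟩ := hy
    exact key k m j n hkm hjn
  | zero_left y hy => simp
  | zero_right x hx => simp
  | add_left x y z hx hy hz h1 h2 =>
    have hcx := by simpa [MvPolynomial.constantCoeff_eq] using hc x hx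
    have hcy := by simpa [MvPolynomial.constantCoeff_eq] using hc y hy
    have hcz := by simpa [MvPolynomial.constantCoeff_eq] using hc z hz
    have h1' := h1 hcx hcz
    have h2' := h2 hcy hcz
    have : R (x + y) * z + (x + y) * R z =
        (R x * z + x * R z) + (R y * z + y * R z) := by
      rw [map_add]; ring
    rw [this, map_add R (R x * z + x * R z) (R y * z + y * R z), ← h1', ← h2',
      map_add R x y, add_mul]
  | add_right x y z hx hy hz h1 h2 =>
    have hcx := by simpa [MvPolynomial.constantCoeff_eq] using hc x hx
    have hcy := by simpa [MvPolynomial.constantCoeff_eq] using hc y hy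
    have hcz := by simpa [MvPolynomial.constantCoeff_eq] using hc z hz
    have h1' := h1 hcx hcy
    have h2' := h2 hcx hcz
    have : R x * (y + z) + x * R (y + z) =
        (R x * y + x * R y) + (R x * z + x * R z) := by
      rw [map_add]; ring
    rw [this, map_add R (R x * y + x * R y) (R x * z + x * R z), ← h1', ← h2',
      map_add R y z, mul_add]
  | smul_left r x y hx hy h =>
    have hcx := by simpa [MvPolynomial.constantCoeff_eq] using hc x hx
    have hcy := by simpa [MvPolynomial.constantCoeff_eq] using hc y hy
    have h' := h hcx hcy
    have : R (r • x) * y + (r • x) * R y = r • (R x * y + x * R y) := by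
      rw [map_smul, smul_mul_assoc, smul_mul_assoc, smul_add]
    rw [this]; simp only [map_smul]; rw [← h', smul_mul_assoc]
  | smul_right r x y hx hy h =>
    have hcx := by simpa [MvPolynomial.constantCoeff_eq] using hc x hx
    have hcy := by simpa [MvPolynomial.constantCoeff_eq] using hc y hy
    have h' := h hcx hcy
    have : R x * (r • y) + x * R (r • y) = r • (R x * y + x * R y) := by
      rw [map_smul, mul_smul_comm, mul_smul_comm, smul_add]
    rw [this]; simp only [map_smul]; rw [← h', mul_smul_comm]
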